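/- Let (M^n, g, W^⊤, λ), n ≥ 3, be a second Ricci soliton where W^⊤ is the tangential part of a concurrent vector field W on the ambient manifold, and suppose (M, g) is W^⊤-totally umbilical, i.e. A_{W^⊥} = f·Id for a smooth function f on M. Then Ric(U, V) = (λ − 4 − 8f − 4f² − 2W^⊤(f)) g(U, V) for all tangent U, V; in particular, M is an Einstein manifold provided λ − 4 − 8f − 4f² − 2W^⊤(f) is a real constant. -/

import Mathlib

/-!
STATEMENT 7. Let `(Mⁿ, g, W^⊤, λ)`, `n ≥ 3`, be a second Ricci soliton
(`𝓛_{W^⊤}𝓛_{W^⊤}g + Ric = λ g`) where `W^⊤` is the tangential part of a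
concurrent vector field `W` (`∇̄W = Id`) on the ambient manifold, and suppose
`(M, g)` is `W^⊤`-totally umbilical, i.e. `A_{W^⊥} = f · Id` for a smooth
function `f` on `M`.  Then
`Ric(U, V) = (λ − 4 − 8f − 4f² − 2W^⊤(f)) g(U, V)` for all tangent `U, V`;
in particular, `M` is an Einstein manifold provided
`λ − 4 − 8f − 4f² − 2W^⊤(f)` is a real constant.

For the tangential part of a concurrent field one has, for tangent `U, V`:
`(𝓛_{W^⊤}𝓛_{W^⊤}g)(U, V) = 2(2 g(U,V) + 4 g(A_{W^⊥}U, V) + 2 g(A_{W^⊥}²U, V)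
  + g((∇_{W^⊤}A_{W^⊥})U, V))`,
and in the umbilical case `A_{W^⊥}² U = f² U`, `(∇_{W^⊤}A_{W^⊥})U = W^⊤(f) U`.
`W^⊤(f)` is the directional derivative `mfderiv f (W^⊤)`.
-/

open Manifold

noncomputable section

theorem umbilical_second_soliton_is_einstein
    {E : Type*} [NormedAddCommGroup E] [NormedSpace ℝ E] [FiniteDimensional ℝ E]
    {H : Type*} [TopologicalSpace H] {I : ModelWithCorners ℝ E H}
    {M : Type*} [TopologicalSpace M] [ChartedSpace H M]
    [IsManifold I (⊤ : ℕ∞) M]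
    -- the dimension `n ≥ 3`
    (hn : 3 ≤ Module.finrank ℝ E)
    -- the induced metric `g`, the Ricci curvature `Ric` of `g`,
    -- and the tensor `LL = 𝓛_{W^⊤}𝓛_{W^⊤}g`
    (g Ric LL : ∀ x : M, TangentSpace I x → TangentSpace I x → ℝ)
    (hg_symm : ∀ (x : M) (u v : TangentSpace I x), g x u v = g x v u)
    (hg_add : ∀ (x : M) (u u' v : TangentSpace I x),
      g x (u + u') v = g x u v + g x u' v)
    (hg_smul : ∀ (x : M) (c : ℝ) (u v : TangentSpace I x),
      g x (c • u) v = c * g x u v)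
    -- the tangential part `W^⊤` of the concurrent vector field `W`
    (Wtop : ∀ x : M, TangentSpace I x)
    -- the shape operator `A = A_{W^⊥}` and its covariant derivative `∇_{W^⊤}A_{W^⊥}`
    (A nablaA : ∀ x : M, TangentSpace I x → TangentSpace I x)
    (lambda : ℝ)
    -- `(M, g)` is `W^⊤`-totally umbilical: `A_{W^⊥} = f · Id`, `f` smooth
    (f : M → ℝ) (hf : ContMDiff I 𝓘(ℝ, ℝ) (⊤ : ℕ∞) f)
    (hA : ∀ (x : M) (u : TangentSpace I x), A x u = f x • u)
    -- hence `(∇_{W^⊤}A_{W^⊥}) U = W^⊤(f) U`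
    (hnablaA : ∀ (x : M) (u : TangentSpace I x),
      nablaA x u = (show ℝ from mfderiv I 𝓘(ℝ, ℝ) f x (Wtop x)) • u)
    -- structural identity for `𝓛_{W^⊤}𝓛_{W^⊤}g` when `W` is concurrent
    (hLL : ∀ (x : M) (u v : TangentSpace I x),
      LL x u v = 2 * (2 * g x u v + 4 * g x (A x u) v + 2 * g x (A x (A x u)) v
        + g x (nablaA x u) v))
    -- second Ricci soliton equation: `𝓛_{W^⊤}𝓛_{W^⊤}g + Ric = λ g`
    (hsoliton : ∀ (x : M) (u v : TangentSpace I x),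
      LL x u v + Ric x u v = lambda * g x u v) :
    (∀ (x : M) (u v : TangentSpace I x),
      Ric x u v = (lambda - 4 - 8 * f x - 4 * (f x) ^ 2
        - 2 * (show ℝ from mfderiv I 𝓘(ℝ, ℝ) f x (Wtop x))) * g x u v) ∧
    -- in particular `M` is Einstein provided the factor is a real constant
    ((∃ c : ℝ, ∀ x : M, lambda - 4 - 8 * f x - 4 * (f x) ^ 2
        - 2 * (show ℝ from mfderiv I 𝓘(ℝ, ℝ) f x (Wtop x)) = c) →
      ∃ c : ℝ, ∀ (x : M) (u v : TangentSpace I x), Ric x u v = c * g x u v) := by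
  have key : ∀ (x : M) (u v : TangentSpace I x),
      Ric x u v = (lambda - 4 - 8 * f x - 4 * (f x) ^ 2
        - 2 * (show ℝ from mfderiv I 𝓘(ℝ, ℝ) f x (Wtop x))) * g x u v := by
    intro x u v
    have h1 := hsoliton x u v
    have h2 : g x (nablaA x u) v = (show ℝ from mfderiv I 𝓘(ℝ, ℝ) f x (Wtop x)) * g x u v := by
      rw [hnablaA, hg_smul]
    generalize (show ℝ from mfderiv I 𝓘(ℝ, ℝ) f x (Wtop x)) = d at h2 ⊢
    rw [hLL, h2] at h1
    simp only [hLL, hA, hnablaA, hg_smul, smul_smul] at h1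
    ring_nf at h1 ⊢
    linarith
  refine ⟨key, fun ⟨c, hc⟩ => ⟨c, fun x u v => by rw [key x u v, hc x]⟩⟩
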